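/- Let a > 0 and β > 0, define errfn(z) := (1/(2π)) ∫_{-∞}^z e^{-ξ²} dξ and e_{a,β}(y,t) := errfn((y + a t)/√(4βt)) - errfn((y - a t)/√(4βt)). Then for each fixed y ∈ ℝ, e_{a,β}(y,t) → 1/(2√π) as t → ∞, and there exist C > 0 and M > 0 such that for all y ≤ 0 and all t ≥ 1, |e_{a,β}(y,t) - 1/(2√π)| ≤ C errfn((|y| - a t)/(M √t)). -/

import Mathlib

open MeasureTheory Real Set Filter

/-- The error function `errfn(z) = (1/(2π)) ∫_{-∞}^z e^{-ξ²} dξ`. -/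
noncomputable def errfn (z : ℝ) : ℝ := (1 / (2 * Real.pi)) * ∫ ξ in Iic z, Real.exp (-ξ^2)

/-- The scattered error-function kernel
`e_{a,β}(y,t) = errfn((y+at)/√(4βt)) - errfn((y-at)/√(4βt))`. -/
noncomputable def eKernel (a β y t : ℝ) : ℝ :=
  errfn ((y + a * t) / Real.sqrt (4 * β * t)) - errfn ((y - a * t) / Real.sqrt (4 * β * t))

lemma gauss_integrable : Integrable (fun ξ : ℝ => Real.exp (-ξ^2)) := by
  simpa using integrable_exp_neg_mul_sq (one_pos)

lemma gauss_total : (∫ ξ : ℝ, Real.exp (-ξ^2)) = Real.sqrt Real.pi := by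
  simpa using integral_gaussian (1 : ℝ)

lemma errfn_mono : Monotone errfn := by
  intro z w hzw
  unfold errfn
  apply mul_le_mul_of_nonneg_left _ (by positivity)
  apply setIntegral_mono_set gauss_integrable.integrableOn
  · filter_upwards with ξ using (Real.exp_pos _).le
  · exact HasSubset.Subset.eventuallyLE (Iic_subset_Iic.2 hzw)

lemma errfn_nonneg (z : ℝ) : 0 ≤ errfn z := by
  apply mul_nonneg (by positivity)
  exact setIntegral_nonneg measurableSet_Iic (fun ξ _ => (Real.exp_pos _).le)

lemma limit_val : (1 / (2 * Real.pi)) * Real.sqrt Real.pi = 1 / (2 * Real.sqrt Real.pi) := by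
  have h : Real.sqrt Real.pi * Real.sqrt Real.pi = Real.pi :=
    Real.mul_self_sqrt Real.pi_pos.le
  have hs : Real.sqrt Real.pi ≠ 0 := by positivity
  field_simp
  nlinarith [h]

lemma errfn_tendsto_atTop :
    Tendsto errfn atTop (nhds (1 / (2 * Real.sqrt Real.pi))) := by
  have h := tendsto_setIntegral_of_monotone (μ := volume)
      (s := fun z : ℝ => Iic z) (f := fun ξ : ℝ => Real.exp (-ξ^2))
      (fun z => measurableSet_Iic)
      (fun u v huv => Iic_subset_Iic.2 huv)
      (by rw [iUnion_Iic]; exact gauss_integrable.integrableOn)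
  rw [iUnion_Iic, Measure.restrict_univ, gauss_total] at h
  have h2 := h.const_mul (1 / (2 * Real.pi))
  rw [limit_val] at h2
  exact h2

lemma errfn_add_neg (z : ℝ) : errfn z + errfn (-z) = 1 / (2 * Real.sqrt Real.pi) := by
  unfold errfn
  have h1 : (∫ ξ in Iic (-z), Real.exp (-ξ^2)) = ∫ ξ in Ioi z, Real.exp (-ξ^2) := by
    rw [← integral_comp_neg_Ioi]
    simp [neg_pow]
  rw [h1, ← mul_add,
    intervalIntegral.integral_Iic_add_Ioi gauss_integrable.integrableOn gauss_integrable.integrableOn,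
    gauss_total, limit_val]

lemma sqrt_tendsto_atTop : Tendsto Real.sqrt atTop atTop :=
  tendsto_atTop_atTop_of_monotone (fun _ _ h => Real.sqrt_le_sqrt h)
    (fun b => ⟨(max b 0)^2, by
      rw [Real.sqrt_sq (le_max_right b 0)]; exact le_max_left b 0⟩)

lemma sum_div_aux (c y a t : ℝ) (hc : 0 < c) (ht : 0 < t) :
    y / (c * Real.sqrt t) + (a / c) * Real.sqrt t = (y + a * t) / (c * Real.sqrt t) := by
  have hst : (0:ℝ) < Real.sqrt t := Real.sqrt_pos.2 ht
  have hts : Real.sqrt t * Real.sqrt t = t := Real.mul_self_sqrt ht.le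
  field_simp
  linear_combination a * hts

/-- Long-time limit of the scattered error-function kernel, with rate quantified by a
retarded error function for `y ≤ 0`, `t ≥ 1`. -/
theorem eKernel_limit (a β : ℝ) (ha : 0 < a) (hβ : 0 < β) :
    (∀ y : ℝ, Tendsto (fun t => eKernel a β y t) atTop (nhds (1 / (2 * Real.sqrt Real.pi)))) ∧
    ∃ C M : ℝ, 0 < C ∧ 0 < M ∧ ∀ y : ℝ, y ≤ 0 → ∀ t : ℝ, 1 ≤ t →
      |eKernel a β y t - 1 / (2 * Real.sqrt Real.pi)|
        ≤ C * errfn ((|y| - a * t) / (M * Real.sqrt t)) := by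
  have hc : (0:ℝ) < Real.sqrt (4 * β) := Real.sqrt_pos.2 (by linarith)
  have hsplit : ∀ t : ℝ, Real.sqrt (4 * β * t)
      = Real.sqrt (4 * β) * Real.sqrt t := fun t =>
    Real.sqrt_mul (by linarith) t
  -- key divergence
  have key : ∀ y : ℝ, Tendsto (fun t => (y + a * t) / Real.sqrt (4 * β * t)) atTop atTop := by
    intro y
    have hev : ∀ᶠ t in atTop, y / (Real.sqrt (4*β) * Real.sqrt t)
        + (a / Real.sqrt (4*β)) * Real.sqrt t
        = (y + a * t) / Real.sqrt (4 * β * t) := by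
      filter_upwards [eventually_gt_atTop (0:ℝ)] with t ht
      rw [hsplit t]
      exact sum_div_aux _ y a t hc ht
    refine Tendsto.congr' hev ?_
    refine Tendsto.add_atTop (C := (0:ℝ)) ?_ ?_
    · have h1 : Tendsto (fun t : ℝ => Real.sqrt (4*β) * Real.sqrt t) atTop atTop :=
        sqrt_tendsto_atTop.const_mul_atTop hc
      exact tendsto_const_nhds.div_atTop h1
    · exact sqrt_tendsto_atTop.const_mul_atTop (by positivity)
  constructor
  · intro y
    have hzp := key y
    have hzm : Tendsto (fun t => (y - a * t) / Real.sqrt (4 * β * t)) atTop atBot := by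
      have h := tendsto_neg_atTop_atBot.comp (key (-y))
      refine h.congr fun t => ?_
      show -(((-y) + a * t) / Real.sqrt (4 * β * t)) = _
      rw [← neg_div]
      ring_nf
    have h1 : Tendsto (fun t => errfn ((y + a * t) / Real.sqrt (4 * β * t))) atTop
        (nhds (1 / (2 * Real.sqrt Real.pi))) := errfn_tendsto_atTop.comp hzp
    have hbot : Tendsto errfn atBot (nhds 0) := by
      have h3 : Tendsto (fun z : ℝ => 1 / (2 * Real.sqrt Real.pi) - errfn (-z)) atBot
          (nhds (1 / (2 * Real.sqrt Real.pi) - 1 / (2 * Real.sqrt Real.pi))) :=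
        tendsto_const_nhds.sub (errfn_tendsto_atTop.comp tendsto_neg_atBot_atTop)
      rw [sub_self] at h3
      refine h3.congr fun z => ?_
      have h4 := errfn_add_neg z
      linarith
    have h2 : Tendsto (fun t => errfn ((y - a * t) / Real.sqrt (4 * β * t))) atTop
        (nhds 0) := hbot.comp hzm
    have h5 := h1.sub h2
    rw [sub_zero] at h5
    exact h5
  · refine ⟨2, 2 * Real.sqrt β, two_pos, by positivity, ?_⟩
    intro y hy t ht
    have ht0 : (0:ℝ) < t := lt_of_lt_of_le one_pos ht
    have hMs : 2 * Real.sqrt β * Real.sqrt t = Real.sqrt (4 * β * t) := by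
      rw [hsplit t]
      congr 1
      rw [show (4:ℝ) * β = 2^2 * β by ring, Real.sqrt_mul (by positivity),
        Real.sqrt_sq (by norm_num)]
    set s := Real.sqrt (4 * β * t) with hs
    have hspos : (0:ℝ) < s := Real.sqrt_pos.2 (by positivity)
    set zp := (y + a * t) / s with hzp
    set zm := (y - a * t) / s with hzm
    have hsub : eKernel a β y t - 1 / (2 * Real.sqrt Real.pi)
        = -(errfn (-zp)) - errfn zm := by
      have h6 := errfn_add_neg zp
      unfold eKernel
      rw [← hs, ← hzp, ← hzm]
      linarith
    have habs : |eKernel a β y t - 1 / (2 * Real.sqrt Real.pi)|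
        = errfn (-zp) + errfn zm := by
      rw [hsub, abs_sub_comm,
        abs_of_nonneg (by linarith [errfn_nonneg (-zp), errfn_nonneg zm])]
      ring
    rw [habs, hMs]
    have hyy : |y| = -y := abs_of_nonpos hy
    have hnzp : -zp = (|y| - a * t) / s := by
      rw [hyy, hzp, ← neg_div]
      ring_nf
    have hzmle : zm ≤ (|y| - a * t) / s := by
      rw [hzm]
      gcongr
      linarith [le_abs_self y]
    have h1 : errfn (-zp) = errfn ((|y| - a * t) / s) := by rw [hnzp]
    have h2 : errfn zm ≤ errfn ((|y| - a * t) / s) := errfn_mono hzmle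
    linarith
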